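/- Let K be a positive definite m×m real matrix with smallest eigenvalue λ > 0, and let K' be positive definite with ‖K' − K‖_F ≤ ε < λ. Let x₀ minimize (1/2)xᵀKx − cᵀx over the polyhedron {x : Gx ≤ g, Dx = d}, and let x₀' minimize (1/2)xᵀK'x − cᵀx over the same polyhedron. Then ‖x₀' − x₀‖₂ ≤ ε/(λ−ε) · ‖x₀‖₂. -/

import Mathlib

open scoped BigOperators
open Matrix

/-- Euclidean norm of a vector. -/
noncomputable def euclNorm {m : ℕ} (v : Fin m → ℝ) : ℝ := Real.sqrt (∑ i, v i ^ 2)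

/-- Frobenius norm of a matrix. -/
noncomputable def frobNorm {m : ℕ} (M : Matrix (Fin m) (Fin m) ℝ) : ℝ :=
  Real.sqrt (∑ i, ∑ j, M i j ^ 2)

lemma euclNorm_nonneg {m : ℕ} (v : Fin m → ℝ) : 0 ≤ euclNorm v := Real.sqrt_nonneg _

lemma dot_le_euclNorm {m : ℕ} (u v : Fin m → ℝ) : u ⬝ᵥ v ≤ euclNorm u * euclNorm v := by
  simpa [dotProduct, euclNorm] using
    Real.sum_mul_le_sqrt_mul_sqrt Finset.univ u v

lemma euclNorm_sq {m : ℕ} (v : Fin m → ℝ) : euclNorm v ^ 2 = ∑ i, v i ^ 2 := by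
  rw [euclNorm, Real.sq_sqrt]
  positivity

lemma euclNorm_mulVec_le {m : ℕ} (M : Matrix (Fin m) (Fin m) ℝ) (v : Fin m → ℝ) :
    euclNorm (M.mulVec v) ≤ frobNorm M * euclNorm v := by
  rw [euclNorm, frobNorm, euclNorm, ← Real.sqrt_mul (by positivity)]
  apply Real.sqrt_le_sqrt
  rw [Finset.sum_mul]
  apply Finset.sum_le_sum
  intro i _
  simpa [Matrix.mulVec, dotProduct] using
    Finset.sum_mul_sq_le_sq_mul_sq Finset.univ (M i) v

lemma euclNorm_add_le {m : ℕ} (u v : Fin m → ℝ) :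
    euclNorm (u + v) ≤ euclNorm u + euclNorm v := by
  have h1 : 0 ≤ euclNorm u + euclNorm v := by
    have := euclNorm_nonneg u; have := euclNorm_nonneg v; linarith
  have h2 : euclNorm (u + v) ^ 2 ≤ (euclNorm u + euclNorm v) ^ 2 := by
    rw [euclNorm_sq, add_sq, euclNorm_sq, euclNorm_sq]
    have hd : ∑ i, u i * v i ≤ euclNorm u * euclNorm v := by
      simpa [dotProduct] using dot_le_euclNorm u v
    have e : ∑ i, ((u + v) i) ^ 2
        = ((∑ i, u i ^ 2) + ∑ i, v i ^ 2) + 2 * (∑ i, u i * v i) := by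
      rw [Finset.mul_sum, ← Finset.sum_add_distrib, ← Finset.sum_add_distrib]
      refine Finset.sum_congr rfl fun i _ => by simp [Pi.add_apply]; ring
    rw [e]; nlinarith [hd]
  nlinarith [euclNorm_nonneg (u + v), h1, h2]

lemma vi_aux (a b : ℝ) (hb : 0 ≤ b)
    (h : ∀ t : ℝ, 0 < t → t ≤ 1 → 0 ≤ t * a + t ^ 2 / 2 * b) : 0 ≤ a := by
  by_contra hneg
  push_neg at hneg
  rcases eq_or_lt_of_le hb with hb0 | hb0
  · have := h 1 one_pos le_rfl
    nlinarith
  · set t := min 1 (-a / b) with ht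
    have htpos : 0 < t := lt_min one_pos (div_pos (by linarith) hb0)
    have ht1 : t ≤ 1 := min_le_left _ _
    have htb : t ≤ -a / b := min_le_right _ _
    have := h t htpos ht1
    have h2 : t * b ≤ -a := by
      have : t * b ≤ (-a / b) * b := by nlinarith
      rwa [div_mul_cancel₀ _ (ne_of_gt hb0)] at this
    nlinarith

lemma frobNorm_sub_comm {m : ℕ} (A B : Matrix (Fin m) (Fin m) ℝ) :
    frobNorm (A - B) = frobNorm (B - A) := by
  unfold frobNorm
  congr 1
  refine Finset.sum_congr rfl fun i _ => Finset.sum_congr rfl fun j _ => ?_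
  simp [Matrix.sub_apply]
  ring

lemma vi {m : ℕ} (A : Matrix (Fin m) (Fin m) ℝ)
    (hsym : ∀ u v : Fin m → ℝ, u ⬝ᵥ A.mulVec v = v ⬝ᵥ A.mulVec u)
    (c x y : Fin m → ℝ) (hbnn : 0 ≤ (y - x) ⬝ᵥ A.mulVec (y - x))
    (hmin : ∀ t : ℝ, 0 < t → t ≤ 1 →
      (1 / 2) * (x ⬝ᵥ A.mulVec x) - c ⬝ᵥ x ≤
      (1 / 2) * ((x + t • (y - x)) ⬝ᵥ A.mulVec (x + t • (y - x))) - c ⬝ᵥ (x + t • (y - x))) :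
    0 ≤ (A.mulVec x) ⬝ᵥ (y - x) - c ⬝ᵥ (y - x) := by
  set h := y - x with hh
  have key := vi_aux ((A.mulVec x) ⬝ᵥ h - c ⬝ᵥ h) (h ⬝ᵥ A.mulVec h) hbnn ?_
  · linarith
  intro t ht0 ht1
  have hm := hmin t ht0 ht1
  have hexp : (x + t • h) ⬝ᵥ A.mulVec (x + t • h)
      = x ⬝ᵥ A.mulVec x + 2 * t * ((A.mulVec x) ⬝ᵥ h) + t ^ 2 * (h ⬝ᵥ A.mulVec h) := by
    rw [Matrix.mulVec_add, Matrix.mulVec_smul, dotProduct_add, add_dotProduct,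
      add_dotProduct, dotProduct_smul, dotProduct_smul,
      smul_dotProduct, smul_dotProduct, hsym x h,
      dotProduct_comm h (A.mulVec x)]
    simp only [smul_eq_mul]
    ring
  have hc : c ⬝ᵥ (x + t • h) = c ⬝ᵥ x + t * (c ⬝ᵥ h) := by
    rw [dotProduct_add, dotProduct_smul, smul_eq_mul]
  rw [hexp, hc] at hm
  nlinarith [hm]

/-- Perturbation bound for positive definite quadratic programs (Daniel 1973):
if `K'` is an `ε`-Frobenius perturbation of `K` (whose smallest eigenvalue is `≥ lam`),
and `x₀`, `x₀'` minimize the respective quadratic objectives over a common polyhedron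
`{x : Gx ≤ g, Dx = d}`, then `‖x₀' − x₀‖₂ ≤ ε/(lam−ε)·‖x₀‖₂`. -/
theorem quadratic_program_perturbation {m k l : ℕ}
    (K K' : Matrix (Fin m) (Fin m) ℝ) (hK : K.PosDef) (hK' : K'.PosDef)
    (lam ε : ℝ) (hlam : 0 < lam)
    (hEig : ∀ v : Fin m → ℝ, lam * (∑ i, v i ^ 2) ≤ v ⬝ᵥ K.mulVec v)
    (hF : frobNorm (K' - K) ≤ ε) (hεlam : ε < lam)
    (c : Fin m → ℝ) (G : Matrix (Fin k) (Fin m) ℝ) (g : Fin k → ℝ)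
    (D : Matrix (Fin l) (Fin m) ℝ) (d : Fin l → ℝ)
    (feasible : (Fin m → ℝ) → Prop)
    (hfeas : ∀ x, feasible x ↔ (∀ i, G.mulVec x i ≤ g i) ∧ D.mulVec x = d)
    (x₀ x₀' : Fin m → ℝ)
    (hx₀ : feasible x₀)
    (hx₀min : ∀ x, feasible x →
      (1 / 2) * (x₀ ⬝ᵥ K.mulVec x₀) - c ⬝ᵥ x₀ ≤ (1 / 2) * (x ⬝ᵥ K.mulVec x) - c ⬝ᵥ x)
    (hx₀' : feasible x₀')
    (hx₀'min : ∀ x, feasible x →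
      (1 / 2) * (x₀' ⬝ᵥ K'.mulVec x₀') - c ⬝ᵥ x₀' ≤ (1 / 2) * (x ⬝ᵥ K'.mulVec x) - c ⬝ᵥ x) :
    euclNorm (x₀' - x₀) ≤ ε / (lam - ε) * euclNorm x₀ := by
  -- symmetry of K and K'
  have symOf : ∀ (A : Matrix (Fin m) (Fin m) ℝ), A.PosDef →
      ∀ u v : Fin m → ℝ, u ⬝ᵥ A.mulVec v = v ⬝ᵥ A.mulVec u := by
    intro A hA u v
    have hAt : Aᵀ = A := by
      have := hA.1
      ext i j
      simpa using congrFun (congrFun this i) j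
    rw [Matrix.dotProduct_mulVec, ← Matrix.mulVec_transpose, hAt, dotProduct_comm]
  have hsymK := symOf K hK
  have hsymK' := symOf K' hK'
  -- convexity of the feasible set
  have hconv : ∀ u v : Fin m → ℝ, feasible u → feasible v →
      ∀ t : ℝ, 0 < t → t ≤ 1 → feasible (u + t • (v - u)) := by
    intro u v hu hv t ht0 ht1
    rw [hfeas] at hu hv ⊢
    obtain ⟨hu1, hu2⟩ := hu
    obtain ⟨hv1, hv2⟩ := hv
    refine ⟨fun i => ?_, ?_⟩
    · have e : G.mulVec (u + t • (v - u)) i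
          = G.mulVec u i + t * (G.mulVec v i - G.mulVec u i) := by
        rw [Matrix.mulVec_add, Matrix.mulVec_smul, Matrix.mulVec_sub]
        simp [smul_eq_mul]
      rw [e]
      nlinarith [hu1 i, hv1 i]
    · have e : D.mulVec (u + t • (v - u)) = D.mulVec u + t • (D.mulVec v - D.mulVec u) := by
        rw [Matrix.mulVec_add, Matrix.mulVec_smul, Matrix.mulVec_sub]
      rw [e, hu2, hv2]
      simp
  -- nonnegativity of quadratic forms
  set h := x₀' - x₀ with hh
  have hbK : 0 ≤ h ⬝ᵥ K.mulVec h := le_trans (by positivity) (hEig h)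
  have hbK' : 0 ≤ (x₀ - x₀') ⬝ᵥ K'.mulVec (x₀ - x₀') := by
    rcases eq_or_ne (x₀ - x₀') 0 with h0 | h0
    · simp [h0]
    · exact le_of_lt (by simpa using hK'.dotProduct_mulVec_pos h0)
  -- variational inequalities
  have vi1 : 0 ≤ (K.mulVec x₀) ⬝ᵥ h - c ⬝ᵥ h := by
    refine vi K hsymK c x₀ x₀' (by simpa [hh] using hbK) ?_
    intro t ht0 ht1
    exact hx₀min _ (hconv x₀ x₀' hx₀ hx₀' t ht0 ht1)
  have vi2 : 0 ≤ (K'.mulVec x₀') ⬝ᵥ (x₀ - x₀') - c ⬝ᵥ (x₀ - x₀') := by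
    refine vi K' hsymK' c x₀' x₀ hbK' ?_
    intro t ht0 ht1
    exact hx₀'min _ (hconv x₀' x₀ hx₀' hx₀ t ht0 ht1)
  -- combine
  have hneg : (x₀ - x₀') = -h := by rw [hh]; ring
  have vi2' : 0 ≤ -((K'.mulVec x₀') ⬝ᵥ h) + c ⬝ᵥ h := by
    rw [hneg] at vi2
    simpa [dotProduct_neg] using vi2
  have hkey : h ⬝ᵥ K.mulVec h ≤ h ⬝ᵥ ((K - K').mulVec x₀') := by
    have e1 : h ⬝ᵥ K.mulVec h = h ⬝ᵥ (K.mulVec x₀') - h ⬝ᵥ (K.mulVec x₀) := by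
      rw [hh, Matrix.mulVec_sub, dotProduct_sub]
    have e2 : h ⬝ᵥ ((K - K').mulVec x₀') = h ⬝ᵥ (K.mulVec x₀') - h ⬝ᵥ (K'.mulVec x₀') := by
      rw [Matrix.sub_mulVec, dotProduct_sub]
    rw [e1, e2]
    have c1 : (K.mulVec x₀) ⬝ᵥ h = h ⬝ᵥ (K.mulVec x₀) := dotProduct_comm _ _
    have c2 : (K'.mulVec x₀') ⬝ᵥ h = h ⬝ᵥ (K'.mulVec x₀') := dotProduct_comm _ _
    rw [c1] at vi1
    rw [c2] at vi2'
    linarith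
  -- norm bounds
  have hεnn : 0 ≤ ε := le_trans (Real.sqrt_nonneg _) hF
  have hn := euclNorm_nonneg h
  have hn0 := euclNorm_nonneg x₀
  have hx₀'bound : euclNorm x₀' ≤ euclNorm x₀ + euclNorm h := by
    have : x₀' = x₀ + h := by rw [hh]; ring
    rw [this]
    exact euclNorm_add_le x₀ h
  have hdot : h ⬝ᵥ ((K - K').mulVec x₀') ≤ euclNorm h * (ε * (euclNorm x₀ + euclNorm h)) := by
    calc h ⬝ᵥ ((K - K').mulVec x₀') ≤ euclNorm h * euclNorm ((K - K').mulVec x₀') :=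
          dot_le_euclNorm _ _
      _ ≤ euclNorm h * (frobNorm (K - K') * euclNorm x₀') := by
          have := euclNorm_mulVec_le (K - K') x₀'
          nlinarith [euclNorm_nonneg ((K - K').mulVec x₀')]
      _ ≤ euclNorm h * (ε * (euclNorm x₀ + euclNorm h)) := by
          have hfc : frobNorm (K - K') ≤ ε := by rw [frobNorm_sub_comm]; exact hF
          have hfnn : 0 ≤ frobNorm (K - K') := Real.sqrt_nonneg _
          have hx' := euclNorm_nonneg x₀'
          exact mul_le_mul_of_nonneg_left (mul_le_mul hfc hx₀'bound hx' hεnn) hn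
  have hlow : lam * euclNorm h ^ 2 ≤ h ⬝ᵥ K.mulVec h := by
    rw [euclNorm_sq]; exact hEig h
  -- final arithmetic
  have hmain : (lam - ε) * euclNorm h ^ 2 ≤ ε * euclNorm x₀ * euclNorm h := by
    nlinarith [hlow, hkey, hdot]
  rcases eq_or_lt_of_le hn with h0 | h0
  · rw [← h0]
    exact mul_nonneg (div_nonneg hεnn (by linarith)) hn0
  · rw [div_mul_eq_mul_div, le_div_iff₀ (by linarith)]
    nlinarith [hmain]
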